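/- As formal power series in q: Σ_{n1 > n2 > 0} (q^{n1}/(1-q^{n1})^2)·(1/(1-q^{n2})) = Σ_{n>0} q^{2n}/(1-q^n)^3. -/

import Mathlib

open PowerSeries

/-- Sum over positive integers, coefficientwise. -/
noncomputable def psum (f : ℕ → ℚ⟦X⟧) : ℚ⟦X⟧ :=
  PowerSeries.mk fun m => ∑ n ∈ Finset.Icc 1 m, PowerSeries.coeff (R := ℚ) m (f n)

/-- Sum over pairs `n₁ > n₂ > 0`, coefficientwise. -/
noncomputable def psumGT (f : ℕ → ℕ → ℚ⟦X⟧) : ℚ⟦X⟧ :=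
  PowerSeries.mk fun m =>
    ∑ p ∈ (Finset.Icc 1 m ×ˢ Finset.Icc 1 m).filter (fun p => p.2 < p.1),
      PowerSeries.coeff (R := ℚ) m (f p.1 p.2)

open Finset

/-! ### Auxiliary power series lemmas -/

noncomputable def geom (n : ℕ) : ℚ⟦X⟧ := PowerSeries.mk fun w => if n ∣ w then 1 else 0

lemma geom_mul_one_sub (n : ℕ) (hn : 1 ≤ n) : geom n * (1 - X ^ n) = 1 := by
  ext w
  rw [mul_sub, mul_one, map_sub, coeff_mul_X_pow']
  simp only [geom, coeff_mk, PowerSeries.coeff_one]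
  rcases Nat.eq_zero_or_pos w with rfl | hw
  · have : ¬ n ≤ 0 := by omega
    simp [this]
  · have hw0 : ¬ w = 0 := by omega
    by_cases hd : n ∣ w
    · have hnw : n ≤ w := Nat.le_of_dvd hw hd
      have h2 : n ∣ w - n := Nat.dvd_sub hd dvd_rfl
      simp [hd, hnw, h2, hw0]
    · by_cases hnw : n ≤ w
      · have h2 : ¬ n ∣ w - n := by
          intro h
          have := Nat.dvd_add h (dvd_refl n)
          rw [Nat.sub_add_cancel hnw] at this
          exact hd this
        simp [hd, hnw, h2, hw0]
      · simp [hd, hnw, hw0]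

lemma inv_one_sub_pow (n : ℕ) (hn : 1 ≤ n) : ((1 - X ^ n : ℚ⟦X⟧))⁻¹ = geom n := by
  have hc : constantCoeff (1 - X ^ n : ℚ⟦X⟧) ≠ 0 := by
    rw [map_sub, map_one, map_pow, constantCoeff_X]
    simp [zero_pow (by omega : n ≠ 0)]
  rw [PowerSeries.inv_eq_iff_mul_eq_one hc]
  exact geom_mul_one_sub n hn

lemma coeff_geom_sq (n : ℕ) (hn : 1 ≤ n) (w : ℕ) :
    PowerSeries.coeff (R := ℚ) w (geom n * geom n) = if n ∣ w then ((w / n + 1 : ℕ) : ℚ) else 0 := by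
  rw [coeff_mul]
  have hterm : ∀ p ∈ antidiagonal w,
      PowerSeries.coeff (R := ℚ) p.1 (geom n) * PowerSeries.coeff (R := ℚ) p.2 (geom n)
        = if n ∣ p.1 ∧ n ∣ p.2 then (1 : ℚ) else 0 := by
    intro p _
    simp only [geom, coeff_mk]
    split_ifs with h1 h2 h3 <;> simp_all
  rw [Finset.sum_congr rfl hterm, ← Finset.sum_filter]
  by_cases hd : n ∣ w
  · obtain ⟨K, rfl⟩ := hd
    rw [Finset.sum_const, nsmul_eq_mul, mul_one]
    have hcard : ((antidiagonal (n * K)).filter (fun p => n ∣ p.1 ∧ n ∣ p.2)).card = K + 1 := by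
      rw [Finset.card_bij' (fun p _ => p.1 / n) (fun k _ => (n * k, n * K - n * k))]
      · rw [Finset.card_range]
      · intro p hp
        simp only [Finset.mem_filter, Finset.HasAntidiagonal.mem_antidiagonal] at hp
        obtain ⟨hsum, ⟨a, ha⟩, h2⟩ := hp
        have han : a ≤ K := by nlinarith
        simp only [Finset.mem_range]
        rw [ha, Nat.mul_div_cancel_left _ (by omega : 0 < n)]
        omega
      · intro k hk
        simp only [Finset.mem_range] at hk
        have hkK : n * k ≤ n * K := Nat.mul_le_mul_left n (by omega)
        simp only [Finset.mem_filter, Finset.HasAntidiagonal.mem_antidiagonal]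
        refine ⟨by omega, Dvd.intro k rfl, ?_⟩
        have heq : n * K - n * k = n * (K - k) := by
          rw [Nat.mul_sub]
        exact heq ▸ Dvd.intro (K - k) rfl
      · intro p hp
        simp only [Finset.mem_filter, Finset.HasAntidiagonal.mem_antidiagonal] at hp
        obtain ⟨hsum, ⟨a, ha⟩, h2⟩ := hp
        have : p.1 / n = a := by rw [ha, Nat.mul_div_cancel_left _ (by omega : 0 < n)]
        rw [this]
        have h3 : p.2 = n * K - n * a := by omega
        rw [← ha]
        exact Prod.ext rfl (by omega)
      · intro k hk
        simp [Nat.mul_div_cancel_left _ (by omega : 0 < n)]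
    rw [hcard, if_pos (Dvd.intro K rfl), Nat.mul_div_cancel_left _ (by omega : 0 < n)]
  · rw [if_neg hd]
    apply Finset.sum_eq_zero
    intro p hp
    simp only [Finset.mem_filter, Finset.HasAntidiagonal.mem_antidiagonal] at hp
    exact absurd (hp.1 ▸ Nat.dvd_add hp.2.1 hp.2.2) hd

lemma dvd_sub_iff (n w : ℕ) (hle : n ≤ w) : n ∣ w - n ↔ n ∣ w := by
  constructor
  · intro h
    have := Nat.dvd_add h (dvd_refl n)
    rwa [Nat.sub_add_cancel hle] at this
  · intro h; exact Nat.dvd_sub h dvd_rfl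

lemma coeff_H (n : ℕ) (hn : 1 ≤ n) (w : ℕ) :
    PowerSeries.coeff (R := ℚ) w (X ^ n * (geom n) ^ 2) = if n ∣ w then ((w / n : ℕ) : ℚ) else 0 := by
  rw [pow_two, coeff_X_pow_mul', coeff_geom_sq n hn]
  by_cases hle : n ≤ w
  · by_cases hd : n ∣ w
    · have hd' : n ∣ w - n := Nat.dvd_sub hd dvd_rfl
      rw [if_pos hle, if_pos hd', if_pos hd]
      norm_cast
      obtain ⟨K, rfl⟩ := hd
      have hK : K ≠ 0 := by rintro rfl; simp at hle; omega
      have e : n * K - n = n * (K - 1) := by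
        zify [hle, show 1 ≤ K by omega]; ring
      rw [e, Nat.mul_div_cancel_left _ (by omega : 0 < n),
        Nat.mul_div_cancel_left _ (by omega : 0 < n)]
      omega
    · have hd' : ¬ n ∣ w - n := fun h => hd ((dvd_sub_iff n w hle).1 h)
      rw [if_pos hle, if_neg hd', if_neg hd]
  · by_cases hd : n ∣ w
    · have hw0 : w = 0 := Nat.eq_zero_of_dvd_of_lt hd (by omega)
      subst hw0
      rw [if_neg hle, if_pos (dvd_zero n)]
      simp
    · rw [if_neg hle, if_neg hd]

lemma coeff_Gp (n : ℕ) (hn : 1 ≤ n) (w : ℕ) :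
    PowerSeries.coeff (R := ℚ) w (X ^ n * geom n) = if n ∣ w ∧ 1 ≤ w then (1 : ℚ) else 0 := by
  rw [coeff_X_pow_mul']
  simp only [geom, coeff_mk]
  by_cases hle : n ≤ w
  · rw [if_pos hle]
    have h1 : 1 ≤ w := by omega
    by_cases hd : n ∣ w
    · rw [if_pos ((dvd_sub_iff n w hle).2 hd), if_pos ⟨hd, h1⟩]
    · rw [if_neg (fun h => hd ((dvd_sub_iff n w hle).1 h)), if_neg (by tauto)]
  · rw [if_neg hle, if_neg ?_]
    rintro ⟨hd, h1⟩
    exact hle (Nat.le_of_dvd (by omega) hd)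

/-! ### The combinatorial sets -/

def QF (m : ℕ) : Finset ((ℕ × ℕ) × (ℕ × ℕ)) :=
  ((Finset.Icc 1 m ×ˢ Finset.Icc 1 m) ×ˢ (Finset.Icc 1 m ×ˢ Finset.Icc 1 m)).filter
    (fun q => q.1.1 * q.2.1 + q.1.2 * q.2.2 = m)

lemma mem_QF {m : ℕ} {q : (ℕ × ℕ) × (ℕ × ℕ)} :
    q ∈ QF m ↔ (1 ≤ q.1.1 ∧ q.1.1 ≤ m) ∧ (1 ≤ q.1.2 ∧ q.1.2 ≤ m) ∧ (1 ≤ q.2.1 ∧ q.2.1 ≤ m)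
      ∧ (1 ≤ q.2.2 ∧ q.2.2 ≤ m) ∧ q.1.1 * q.2.1 + q.1.2 * q.2.2 = m := by
  simp [QF, Finset.mem_filter, Finset.mem_product, Finset.mem_Icc]
  tauto

def QGT (m : ℕ) : Finset ((ℕ × ℕ) × (ℕ × ℕ)) := (QF m).filter (fun q => q.1.2 < q.1.1)
def QLT (m : ℕ) : Finset ((ℕ × ℕ) × (ℕ × ℕ)) := (QF m).filter (fun q => q.1.1 < q.1.2)
def QD (m : ℕ) : Finset ((ℕ × ℕ) × (ℕ × ℕ)) := (QF m).filter (fun q => q.1.1 = q.1.2)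
def PP (m : ℕ) : Finset (ℕ × ℕ) := (Finset.Icc 1 m ×ˢ Finset.Icc 1 m).filter (fun p => p.2 < p.1)

lemma trichotomy (m : ℕ) (f : (ℕ × ℕ) × (ℕ × ℕ) → ℕ) :
    ∑ q ∈ QF m, f q = ∑ q ∈ QGT m, f q + ∑ q ∈ QLT m, f q + ∑ q ∈ QD m, f q := by
  classical
  rw [← Finset.sum_filter_add_sum_filter_not (QF m) (fun q => q.1.2 < q.1.1) f]
  have h2 := Finset.sum_filter_add_sum_filter_not
    ((QF m).filter (fun q => ¬ q.1.2 < q.1.1)) (fun q => q.1.1 < q.1.2) f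
  rw [Finset.filter_filter, Finset.filter_filter] at h2
  have e1 : (QF m).filter (fun q => ¬q.1.2 < q.1.1 ∧ q.1.1 < q.1.2) = QLT m := by
    apply Finset.filter_congr; intro q _; omega
  have e2 : (QF m).filter (fun q => ¬q.1.2 < q.1.1 ∧ ¬q.1.1 < q.1.2) = QD m := by
    apply Finset.filter_congr; intro q _; omega
  rw [e1, e2] at h2
  rw [QGT, ← h2, add_assoc]

lemma tau_lemma (m : ℕ) : ∑ q ∈ QF m, q.2.1 = ∑ q ∈ QF m, q.1.2 := by
  apply Finset.sum_nbij' (fun q => ((q.2.2, q.2.1), (q.1.2, q.1.1)))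
    (fun q => ((q.2.2, q.2.1), (q.1.2, q.1.1)))
  · rintro ⟨⟨u1, u2⟩, v1, v2⟩ hq
    rw [mem_QF] at hq ⊢
    simp only at hq ⊢
    refine ⟨hq.2.2.2.1, hq.2.2.1, hq.2.1, hq.1, ?_⟩
    have := hq.2.2.2.2
    nlinarith [this]
  · rintro ⟨⟨u1, u2⟩, v1, v2⟩ hq
    rw [mem_QF] at hq ⊢
    simp only at hq ⊢
    refine ⟨hq.2.2.2.1, hq.2.2.1, hq.2.1, hq.1, ?_⟩
    have := hq.2.2.2.2
    nlinarith [this]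
  · rintro ⟨⟨u1, u2⟩, v1, v2⟩ _; rfl
  · rintro ⟨⟨u1, u2⟩, v1, v2⟩ _; rfl
  · rintro ⟨⟨u1, u2⟩, v1, v2⟩ _; rfl

lemma sigma_lemma (m : ℕ) (f g : (ℕ × ℕ) × (ℕ × ℕ) → ℕ)
    (hfg : ∀ q, g ((q.1.2, q.1.1), (q.2.2, q.2.1)) = f q) :
    ∑ q ∈ QLT m, f q = ∑ q ∈ QGT m, g q := by
  apply Finset.sum_nbij' (fun q => ((q.1.2, q.1.1), (q.2.2, q.2.1)))
    (fun q => ((q.1.2, q.1.1), (q.2.2, q.2.1)))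
  · rintro ⟨⟨u1, u2⟩, v1, v2⟩ hq
    simp only [QLT, QGT, Finset.mem_filter, mem_QF] at hq ⊢
    obtain ⟨⟨h1, h2, h3, h4, h5⟩, h6⟩ := hq
    exact ⟨⟨h2, h1, h4, h3, by nlinarith [h5]⟩, h6⟩
  · rintro ⟨⟨u1, u2⟩, v1, v2⟩ hq
    simp only [QLT, QGT, Finset.mem_filter, mem_QF] at hq ⊢
    obtain ⟨⟨h1, h2, h3, h4, h5⟩, h6⟩ := hq
    exact ⟨⟨h2, h1, h4, h3, by nlinarith [h5]⟩, h6⟩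
  · rintro ⟨⟨u1, u2⟩, v1, v2⟩ _; rfl
  · rintro ⟨⟨u1, u2⟩, v1, v2⟩ _; rfl
  · rintro ⟨⟨u1, u2⟩, v1, v2⟩ _; exact (hfg _).symm

lemma conj_lemma (m : ℕ) (f g : (ℕ × ℕ) × (ℕ × ℕ) → ℕ)
    (hfg : ∀ q, q ∈ QGT m → g ((q.2.1 + q.2.2, q.2.1), (q.1.2, q.1.1 - q.1.2)) = f q) :
    ∑ q ∈ QGT m, f q = ∑ q ∈ QGT m, g q := by
  have hmem : ∀ q ∈ QGT m, ((q.2.1 + q.2.2, q.2.1), (q.1.2, q.1.1 - q.1.2)) ∈ QGT m := by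
    rintro ⟨⟨u1, u2⟩, v1, v2⟩ hq
    simp only [QGT, Finset.mem_filter, mem_QF] at hq ⊢
    obtain ⟨⟨h1, h2, h3, h4, h5⟩, h6⟩ := hq
    have hle : u2 ≤ u1 := le_of_lt h6
    refine ⟨⟨⟨by omega, by nlinarith⟩, ⟨h3.1, h3.2⟩, ⟨h2.1, h2.2⟩, ⟨by omega, by omega⟩, ?_⟩, by omega⟩
    zify [hle] at h5 ⊢
    linear_combination h5
  apply Finset.sum_nbij' (fun q => ((q.2.1 + q.2.2, q.2.1), (q.1.2, q.1.1 - q.1.2)))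
    (fun q => ((q.2.1 + q.2.2, q.2.1), (q.1.2, q.1.1 - q.1.2))) hmem hmem
  · rintro ⟨⟨u1, u2⟩, v1, v2⟩ hq
    simp only [QGT, Finset.mem_filter, mem_QF] at hq
    obtain ⟨⟨h1, h2, h3, h4, h5⟩, h6⟩ := hq
    simp only [Prod.mk.injEq]
    refine ⟨⟨by omega, ?_⟩, ?_, by omega⟩ <;> trivial
  · rintro ⟨⟨u1, u2⟩, v1, v2⟩ hq
    simp only [QGT, Finset.mem_filter, mem_QF] at hq
    obtain ⟨⟨h1, h2, h3, h4, h5⟩, h6⟩ := hq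
    simp only [Prod.mk.injEq]
    refine ⟨⟨by omega, ?_⟩, ?_, by omega⟩ <;> trivial
  · intro q hq; exact (hfg q hq).symm

lemma ledger (m : ℕ) :
    ∑ q ∈ QD m, q.2.1 = ∑ q ∈ QGT m, q.2.1 + ∑ q ∈ QD m, q.1.1 := by
  have t1 := trichotomy m (fun q => q.2.1)
  have t2 := trichotomy m (fun q => q.1.2)
  have htau := tau_lemma m
  have hs1 : ∑ q ∈ QLT m, q.2.1 = ∑ q ∈ QGT m, q.2.2 :=
    sigma_lemma m _ _ (fun q => rfl)
  have hs2 : ∑ q ∈ QLT m, q.1.2 = ∑ q ∈ QGT m, q.1.1 :=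
    sigma_lemma m _ _ (fun q => rfl)
  have hc1 : ∑ q ∈ QGT m, q.2.1 = ∑ q ∈ QGT m, q.1.2 :=
    conj_lemma m (fun q => q.2.1) (fun q => q.1.2) (fun q _ => rfl)
  have hc2 : ∑ q ∈ QGT m, q.1.1 = ∑ q ∈ QGT m, (q.2.1 + q.2.2) := by
    apply conj_lemma m (fun q => q.1.1) (fun q => q.2.1 + q.2.2)
    rintro ⟨⟨u1, u2⟩, v1, v2⟩ hq
    simp only [QGT, Finset.mem_filter, mem_QF] at hq
    simp only
    omega
  have hd : ∑ q ∈ QD m, q.1.1 = ∑ q ∈ QD m, q.1.2 := by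
    apply Finset.sum_congr rfl
    intro q hq
    simp only [QD, Finset.mem_filter] at hq
    exact hq.2
  rw [Finset.sum_add_distrib] at hc2
  omega
lemma mem_PPd {m : ℕ} {p : ℕ × ℕ} (hp : p ∈ (PP m).filter (fun p => p.1 ∣ m)) :
    1 ≤ p.1 ∧ p.1 ≤ m ∧ 1 ≤ p.2 ∧ p.2 ≤ m ∧ p.2 < p.1 ∧ p.1 ∣ m := by
  simp only [Finset.mem_filter, PP, Finset.mem_product, Finset.mem_Icc] at hp
  tauto

lemma M2 (m : ℕ) :
    ∑ p ∈ PP m, (if p.1 ∣ m then m / p.1 else 0) = ∑ q ∈ QD m, q.1.1 := by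
  rw [Finset.sum_ite, Finset.sum_const, smul_zero, add_zero]
  apply Finset.sum_nbij' (fun p => ((m / p.1, m / p.1), (p.2, p.1 - p.2)))
    (fun q => (q.2.1 + q.2.2, q.2.1))
  case hi =>
    rintro ⟨n1, n2⟩ hp
    obtain ⟨h1, h2, h3, h4, h5, h6⟩ := mem_PPd hp
    simp only at h5 h6 ⊢
    have hd1 : 1 ≤ m / n1 := (Nat.one_le_div_iff (by omega)).2 h2
    have hd2 : m / n1 ≤ m := Nat.div_le_self m n1
    simp only [QD, Finset.mem_filter, mem_QF]
    refine ⟨⟨⟨hd1, hd2⟩, ⟨hd1, hd2⟩, ⟨h3, by omega⟩, ⟨by omega, by omega⟩, ?_⟩, trivial⟩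
    have e1 : m / n1 * n2 + m / n1 * (n1 - n2) = m / n1 * (n2 + (n1 - n2)) := by rw [Nat.mul_add]
    have e2 : n2 + (n1 - n2) = n1 := by omega
    rw [e1, e2, Nat.div_mul_cancel h6]
  case hj =>
    rintro ⟨⟨u1, u2⟩, v1, v2⟩ hq
    simp only [QD, Finset.mem_filter, mem_QF] at hq
    obtain ⟨⟨h1, h2, h3, h4, h5⟩, h6⟩ := hq
    simp only at h5 h6 ⊢
    subst h6
    have heq : u1 * (v1 + v2) = m := by rw [Nat.mul_add]; omega
    have hle : v1 + v2 ≤ m := heq ▸ Nat.le_mul_of_pos_left _ (by omega : 0 < u1)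
    simp only [Finset.mem_filter, PP, Finset.mem_product, Finset.mem_Icc]
    exact ⟨⟨⟨⟨by omega, hle⟩, ⟨h3.1, h3.2⟩⟩, by omega⟩, ⟨u1, by rw [← heq]; ring⟩⟩
  case left_neg =>
    rintro ⟨n1, n2⟩ hp
    obtain ⟨h1, h2, h3, h4, h5, h6⟩ := mem_PPd hp
    show (n2 + (n1 - n2), n2) = (n1, n2)
    have e : n2 + (n1 - n2) = n1 := by omega
    rw [e]
  case right_neg =>
    rintro ⟨⟨u1, u2⟩, v1, v2⟩ hq
    simp only [QD, Finset.mem_filter, mem_QF] at hq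
    obtain ⟨⟨h1, h2, h3, h4, h5⟩, h6⟩ := hq
    simp only at h5 h6 ⊢
    subst h6
    show ((m / (v1 + v2), m / (v1 + v2)), (v1, v1 + v2 - v1)) = ((u1, u1), (v1, v2))
    have heq : m = u1 * (v1 + v2) := by rw [Nat.mul_add]; omega
    have hdiv : m / (v1 + v2) = u1 := by rw [heq, Nat.mul_div_cancel _ (by omega : 0 < v1 + v2)]
    have e2 : v1 + v2 - v1 = v2 := by omega
    rw [hdiv, e2]
  case h =>
    rintro ⟨n1, n2⟩ hp
    rfl
lemma M1 (m : ℕ) :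
    ∑ p ∈ PP m, ∑ x ∈ antidiagonal m,
        (if p.1 ∣ x.1 ∧ p.2 ∣ x.2 ∧ 1 ≤ x.2 then x.1 / p.1 else 0)
      = ∑ q ∈ QGT m, q.2.1 := by
  rw [← Finset.sum_product']
  rw [Finset.sum_ite, Finset.sum_const, smul_zero, add_zero]
  have hmem : ∀ z : (ℕ × ℕ) × (ℕ × ℕ), ∀ cond : (ℕ × ℕ) × (ℕ × ℕ) → Prop,
      ∀ [DecidablePred cond],
      z ∈ (PP m ×ˢ antidiagonal m).filter cond ↔
      ((1 ≤ z.1.1 ∧ z.1.1 ≤ m) ∧ (1 ≤ z.1.2 ∧ z.1.2 ≤ m) ∧ z.1.2 < z.1.1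
        ∧ z.2.1 + z.2.2 = m ∧ cond z) := by
    intro z cond _
    simp [PP, Finset.mem_filter, Finset.mem_product, Finset.mem_Icc, Finset.HasAntidiagonal.mem_antidiagonal]
    tauto
  rw [← Finset.sum_subset (s₁ := (PP m ×ˢ antidiagonal m).filter
        (fun z => (z.1.1 ∣ z.2.1 ∧ z.1.2 ∣ z.2.2 ∧ 1 ≤ z.2.2) ∧ 1 ≤ z.2.1))
      (s₂ := (PP m ×ˢ antidiagonal m).filter
        (fun z => z.1.1 ∣ z.2.1 ∧ z.1.2 ∣ z.2.2 ∧ 1 ≤ z.2.2))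
      (by intro z hz
          rw [hmem] at hz ⊢
          tauto)
      (by intro z hz hz2
          rw [hmem] at hz
          have : z.2.1 = 0 := by
            by_contra hne
            apply hz2
            rw [hmem]
            refine ⟨hz.1, hz.2.1, hz.2.2.1, hz.2.2.2.1, ⟨hz.2.2.2.2, by omega⟩⟩
          rw [this, Nat.zero_div])]
  apply Finset.sum_nbij' (fun z => ((z.1.1, z.1.2), (z.2.1 / z.1.1, z.2.2 / z.1.2)))
    (fun q => ((q.1.1, q.1.2), (q.1.1 * q.2.1, q.1.2 * q.2.2)))
  case hi =>
    rintro ⟨⟨n1, n2⟩, i, j⟩ hz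
    rw [hmem] at hz
    obtain ⟨⟨h1, h2⟩, ⟨h3, h4⟩, h5, h6, ⟨hd1, hd2, hj1⟩, hi1⟩ := hz
    simp only at h1 h2 h3 h4 h5 h6 hd1 hd2 hj1 hi1 ⊢
    simp only [QGT, Finset.mem_filter, mem_QF]
    have hv1 : 1 ≤ i / n1 := (Nat.one_le_div_iff (by omega)).2 (Nat.le_of_dvd (by omega) hd1)
    have hv2 : 1 ≤ j / n2 := (Nat.one_le_div_iff (by omega)).2 (Nat.le_of_dvd (by omega) hd2)
    refine ⟨⟨⟨h1, h2⟩, ⟨h3, h4⟩, ⟨hv1, le_trans (Nat.div_le_self _ _) (by omega)⟩,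
      ⟨hv2, le_trans (Nat.div_le_self _ _) (by omega)⟩, ?_⟩, h5⟩
    rw [Nat.mul_div_cancel' hd1, Nat.mul_div_cancel' hd2]
    exact h6
  case hj =>
    rintro ⟨⟨u1, u2⟩, v1, v2⟩ hq
    simp only [QGT, Finset.mem_filter, mem_QF] at hq
    obtain ⟨⟨h1, h2, h3, h4, h5⟩, h6⟩ := hq
    simp only at h5 h6 ⊢
    rw [hmem]
    refine ⟨⟨h1.1, h1.2⟩, ⟨h2.1, h2.2⟩, h6, h5, ⟨dvd_mul_right _ _, dvd_mul_right _ _,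
      Nat.mul_pos (by omega) (by omega)⟩, Nat.mul_pos (by omega) (by omega)⟩
  case left_neg =>
    rintro ⟨⟨n1, n2⟩, i, j⟩ hz
    rw [hmem] at hz
    obtain ⟨⟨h1, h2⟩, ⟨h3, h4⟩, h5, h6, ⟨hd1, hd2, hj1⟩, hi1⟩ := hz
    show ((n1, n2), (n1 * (i / n1), n2 * (j / n2))) = ((n1, n2), (i, j))
    rw [Nat.mul_div_cancel' hd1, Nat.mul_div_cancel' hd2]
  case right_neg =>
    rintro ⟨⟨u1, u2⟩, v1, v2⟩ hq
    simp only [QGT, Finset.mem_filter, mem_QF] at hq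
    obtain ⟨⟨h1, h2, h3, h4, h5⟩, h6⟩ := hq
    show ((u1, u2), (u1 * v1 / u1, u2 * v2 / u2)) = ((u1, u2), (v1, v2))
    rw [Nat.mul_div_cancel_left _ (by omega : 0 < u1), Nat.mul_div_cancel_left _ (by omega : 0 < u2)]
  case h =>
    rintro ⟨⟨n1, n2⟩, i, j⟩ hz
    rfl

lemma M3 (m : ℕ) :
    ∑ n ∈ Finset.Icc 1 m, ∑ x ∈ antidiagonal m,
        (if n ∣ x.1 ∧ n ∣ x.2 ∧ 1 ≤ x.2 then x.1 / n else 0)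
      = ∑ q ∈ QD m, q.2.1 := by
  rw [← Finset.sum_product']
  rw [Finset.sum_ite, Finset.sum_const, smul_zero, add_zero]
  have hmem : ∀ z : ℕ × (ℕ × ℕ), ∀ cond : ℕ × (ℕ × ℕ) → Prop,
      ∀ [DecidablePred cond],
      z ∈ (Finset.Icc 1 m ×ˢ antidiagonal m).filter cond ↔
      ((1 ≤ z.1 ∧ z.1 ≤ m) ∧ z.2.1 + z.2.2 = m ∧ cond z) := by
    intro z cond _
    simp [Finset.mem_filter, Finset.mem_product, Finset.mem_Icc, Finset.HasAntidiagonal.mem_antidiagonal]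
    tauto
  rw [← Finset.sum_subset (s₁ := (Finset.Icc 1 m ×ˢ antidiagonal m).filter
        (fun z => (z.1 ∣ z.2.1 ∧ z.1 ∣ z.2.2 ∧ 1 ≤ z.2.2) ∧ 1 ≤ z.2.1))
      (s₂ := (Finset.Icc 1 m ×ˢ antidiagonal m).filter
        (fun z => z.1 ∣ z.2.1 ∧ z.1 ∣ z.2.2 ∧ 1 ≤ z.2.2))
      (by intro z hz
          rw [hmem] at hz ⊢
          tauto)
      (by intro z hz hz2
          rw [hmem] at hz
          have : z.2.1 = 0 := by
            by_contra hne
            apply hz2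
            rw [hmem]
            exact ⟨hz.1, hz.2.1, ⟨hz.2.2, by omega⟩⟩
          rw [this, Nat.zero_div])]
  apply Finset.sum_nbij' (fun z => ((z.1, z.1), (z.2.1 / z.1, z.2.2 / z.1)))
    (fun q => (q.1.1, (q.1.1 * q.2.1, q.1.2 * q.2.2)))
  case hi =>
    rintro ⟨n, i, j⟩ hz
    rw [hmem] at hz
    obtain ⟨⟨h1, h2⟩, h6, ⟨hd1, hd2, hj1⟩, hi1⟩ := hz
    simp only at h1 h2 h6 hd1 hd2 hj1 hi1 ⊢
    simp only [QD, Finset.mem_filter, mem_QF]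
    have hv1 : 1 ≤ i / n := (Nat.one_le_div_iff (by omega)).2 (Nat.le_of_dvd (by omega) hd1)
    have hv2 : 1 ≤ j / n := (Nat.one_le_div_iff (by omega)).2 (Nat.le_of_dvd (by omega) hd2)
    refine ⟨⟨⟨h1, h2⟩, ⟨h1, h2⟩, ⟨hv1, le_trans (Nat.div_le_self _ _) (by omega)⟩,
      ⟨hv2, le_trans (Nat.div_le_self _ _) (by omega)⟩, ?_⟩, trivial⟩
    rw [Nat.mul_div_cancel' hd1, Nat.mul_div_cancel' hd2]
    exact h6
  case hj =>
    rintro ⟨⟨u1, u2⟩, v1, v2⟩ hq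
    simp only [QD, Finset.mem_filter, mem_QF] at hq
    obtain ⟨⟨h1, h2, h3, h4, h5⟩, h6⟩ := hq
    simp only at h5 h6 ⊢
    rw [hmem]
    subst h6
    exact ⟨⟨h1.1, h1.2⟩, h5, ⟨dvd_mul_right _ _, dvd_mul_right _ _,
      Nat.mul_pos (by omega) (by omega)⟩, Nat.mul_pos (by omega) (by omega)⟩
  case left_neg =>
    rintro ⟨n, i, j⟩ hz
    rw [hmem] at hz
    obtain ⟨⟨h1, h2⟩, h6, ⟨hd1, hd2, hj1⟩, hi1⟩ := hz
    show (n, (n * (i / n), n * (j / n))) = (n, (i, j))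
    rw [Nat.mul_div_cancel' hd1, Nat.mul_div_cancel' hd2]
  case right_neg =>
    rintro ⟨⟨u1, u2⟩, v1, v2⟩ hq
    simp only [QD, Finset.mem_filter, mem_QF] at hq
    obtain ⟨⟨h1, h2, h3, h4, h5⟩, h6⟩ := hq
    try simp only at h5 h6
    subst h6
    show ((u1, u1), (u1 * v1 / u1, u1 * v2 / u1)) = ((u1, u1), (v1, v2))
    rw [Nat.mul_div_cancel_left _ (by omega : 0 < u1), Nat.mul_div_cancel_left _ (by omega : 0 < u1)]
  case h =>
    rintro ⟨n, i, j⟩ hz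
    rfl
lemma splitW (m n1 n2 : ℕ) :
    ∑ x ∈ antidiagonal m, (if n1 ∣ x.1 ∧ n2 ∣ x.2 then x.1 / n1 else 0)
      = ∑ x ∈ antidiagonal m, (if n1 ∣ x.1 ∧ n2 ∣ x.2 ∧ 1 ≤ x.2 then x.1 / n1 else 0)
        + (if n1 ∣ m then m / n1 else 0) := by
  have hsplit : ∀ x ∈ antidiagonal m,
      (if n1 ∣ x.1 ∧ n2 ∣ x.2 then x.1 / n1 else 0)
        = (if n1 ∣ x.1 ∧ n2 ∣ x.2 ∧ 1 ≤ x.2 then x.1 / n1 else 0)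
          + (if n1 ∣ x.1 ∧ x.2 = 0 then x.1 / n1 else 0) := by
    intro x _
    by_cases h0 : x.2 = 0
    · simp [h0]
    · simp [h0, Nat.one_le_iff_ne_zero]
  rw [Finset.sum_congr rfl hsplit, Finset.sum_add_distrib]
  congr 1
  rw [Finset.sum_eq_single (m, 0)]
  · simp
  · rintro ⟨b1, b2⟩ hb hne
    rw [Finset.HasAntidiagonal.mem_antidiagonal] at hb
    by_cases hb2 : b2 = 0
    · exfalso; apply hne; subst hb2; simp at hb ⊢; omega
    · simp only at hb2 ⊢
      rw [if_neg (by tauto)]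
  · intro hmem
    exfalso; apply hmem; rw [Finset.HasAntidiagonal.mem_antidiagonal]; simp

lemma coreN (m : ℕ) :
    ∑ p ∈ PP m, ∑ x ∈ antidiagonal m, (if p.1 ∣ x.1 ∧ p.2 ∣ x.2 then x.1 / p.1 else 0)
      = ∑ n ∈ Finset.Icc 1 m, ∑ x ∈ antidiagonal m,
          (if n ∣ x.1 ∧ n ∣ x.2 ∧ 1 ≤ x.2 then x.1 / n else 0) := by
  have h1 : ∀ p ∈ PP m,
      ∑ x ∈ antidiagonal m, (if p.1 ∣ x.1 ∧ p.2 ∣ x.2 then x.1 / p.1 else 0)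
        = ∑ x ∈ antidiagonal m, (if p.1 ∣ x.1 ∧ p.2 ∣ x.2 ∧ 1 ≤ x.2 then x.1 / p.1 else 0)
          + (if p.1 ∣ m then m / p.1 else 0) := fun p _ => splitW m p.1 p.2
  rw [Finset.sum_congr rfl h1, Finset.sum_add_distrib, M1, M2, M3]
  exact (ledger m).symm

/-- `∑_{n₁ > n₂ > 0} q^{n₁}/((1-q^{n₁})²(1-q^{n₂})) = ∑_{n>0} q^{2n}/(1-q^n)³`. -/
theorem stmt3 :
    psumGT (fun n₁ n₂ => X ^ n₁ * ((1 - X ^ n₁)⁻¹) ^ 2 * (1 - X ^ n₂)⁻¹)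
      = psum (fun n => X ^ (2 * n) * ((1 - X ^ n)⁻¹) ^ 3) := by
  apply PowerSeries.ext
  intro m
  simp only [psumGT, psum, coeff_mk]
  have hL : ∀ p ∈ (Finset.Icc 1 m ×ˢ Finset.Icc 1 m).filter (fun p : ℕ × ℕ => p.2 < p.1),
      PowerSeries.coeff (R := ℚ) m (X ^ p.1 * ((1 - X ^ p.1)⁻¹) ^ 2 * (1 - X ^ p.2)⁻¹)
        = ((∑ x ∈ antidiagonal m,
            (if p.1 ∣ x.1 ∧ p.2 ∣ x.2 then x.1 / p.1 else 0) : ℕ) : ℚ) := by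
    intro p hp
    simp only [Finset.mem_filter, Finset.mem_product, Finset.mem_Icc] at hp
    have h1 : 1 ≤ p.1 := hp.1.1.1
    have h2 : 1 ≤ p.2 := hp.1.2.1
    rw [inv_one_sub_pow p.1 h1, inv_one_sub_pow p.2 h2, coeff_mul, Nat.cast_sum]
    apply Finset.sum_congr rfl
    intro x _
    rw [coeff_H p.1 h1]
    have hg : PowerSeries.coeff (R := ℚ) x.2 (geom p.2) = if p.2 ∣ x.2 then (1 : ℚ) else 0 := by
      simp [geom, coeff_mk]
    rw [hg]
    by_cases hA : p.1 ∣ x.1 <;> by_cases hB : p.2 ∣ x.2 <;> simp [hA, hB]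
  have hR : ∀ n ∈ Finset.Icc 1 m,
      PowerSeries.coeff (R := ℚ) m (X ^ (2 * n) * ((1 - X ^ n)⁻¹) ^ 3)
        = ((∑ x ∈ antidiagonal m,
            (if n ∣ x.1 ∧ n ∣ x.2 ∧ 1 ≤ x.2 then x.1 / n else 0) : ℕ) : ℚ) := by
    intro n hn
    rw [Finset.mem_Icc] at hn
    have h1 : 1 ≤ n := hn.1
    rw [inv_one_sub_pow n h1]
    have hser : (X ^ (2 * n) * (geom n) ^ 3 : ℚ⟦X⟧)
        = (X ^ n * (geom n) ^ 2) * (X ^ n * geom n) := by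
      rw [two_mul, pow_add]; ring
    rw [hser, coeff_mul, Nat.cast_sum]
    apply Finset.sum_congr rfl
    intro x _
    rw [coeff_H n h1, coeff_Gp n h1]
    by_cases hA : n ∣ x.1 <;> by_cases hB : n ∣ x.2 <;> by_cases hC : 1 ≤ x.2 <;>
      simp [hA, hB, hC]
  rw [Finset.sum_congr rfl hL, Finset.sum_congr rfl hR, ← Nat.cast_sum, ← Nat.cast_sum]
  exact_mod_cast congrArg (Nat.cast : ℕ → ℚ) (coreN m)
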